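/- Theorem 4 (ρ_{S1} for 1-D mapping): let N ≥ 2 and let σ, π be independent uniformly random permutations of Fin N (product of uniform measures on Equiv.Perm (Fin N) × Equiv.Perm (Fin N)); set X_w = u (σ w), Y_w = u (π w) and symbol energy E_w = X_w² + Y_w². Then for any two distinct positions w ≠ w', E[E_w · E_{w'}] = 2ρ₁ + 2m₂², where ρ₁ = (N·m₂² − m₄)/(N − 1). -/

import Mathlib

/-- Expectation of a real-valued random variable on the finite probability space
`Equiv.Perm (Fin N) × Equiv.Perm (Fin N)` of pairs of independent uniformly random
permutations (product of uniform measures = uniform measure on the product). -/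
noncomputable def permExpect2 (N : ℕ)
    (f : Equiv.Perm (Fin N) × Equiv.Perm (Fin N) → ℝ) : ℝ :=
  (∑ p : Equiv.Perm (Fin N) × Equiv.Perm (Fin N), f p)
    / (Fintype.card (Equiv.Perm (Fin N) × Equiv.Perm (Fin N)) : ℝ)

/-- Empirical `k`-th moment of the amplitude block `u`. -/
noncomputable def empMoment (N : ℕ) (u : Fin N → ℝ) (k : ℕ) : ℝ :=
  (1 / (N : ℝ)) * ∑ i : Fin N, (u i) ^ k

lemma sum_perm_apply' {n : ℕ} (w : Fin (n+1)) (c : Fin (n+1) → ℝ) :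
    ∑ σ : Equiv.Perm (Fin (n+1)), c (σ w) = (n.factorial : ℝ) * ∑ i, c i := by
  have h0 : ∑ σ : Equiv.Perm (Fin (n+1)), c (σ w)
      = ∑ σ : Equiv.Perm (Fin (n+1)), c (σ 0) := by
    refine Fintype.sum_equiv (Equiv.mulRight (Equiv.swap 0 w)) _ _ ?_
    intro σ
    simp [Equiv.Perm.mul_apply]
  rw [h0, ← Equiv.Perm.decomposeFin.symm.sum_comp]
  rw [Fintype.sum_prod_type]
  simp only [Equiv.Perm.decomposeFin_symm_apply_zero]
  simp [Finset.sum_const, Fintype.card_perm, Fintype.card_fin, mul_comm, Finset.mul_sum]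

lemma sum_perm_pair_zero' {n : ℕ} (w' : Fin (n+2)) (hw' : w' ≠ 0)
    (f g : Fin (n+2) → ℝ) :
    ∑ σ : Equiv.Perm (Fin (n+2)), f (σ 0) * g (σ w')
      = (n.factorial : ℝ) * ((∑ i, f i) * (∑ i, g i) - ∑ i, f i * g i) := by
  obtain ⟨j, rfl⟩ : ∃ j : Fin (n+1), w' = j.succ := ⟨w'.pred hw', (Fin.succ_pred _ _).symm⟩
  rw [← Equiv.Perm.decomposeFin.symm.sum_comp, Fintype.sum_prod_type]
  simp only [Equiv.Perm.decomposeFin_symm_apply_zero,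
    Equiv.Perm.decomposeFin_symm_apply_succ]
  have key : ∀ p : Fin (n+2),
      ∑ e : Equiv.Perm (Fin (n+1)), f p * g (Equiv.swap 0 p (e j).succ)
        = (n.factorial : ℝ) * (f p * ((∑ i, g i) - g p)) := by
    intro p
    rw [← Finset.mul_sum, sum_perm_apply' j (fun i => g (Equiv.swap 0 p i.succ))]
    have hsucc : ∑ i : Fin (n+1), g (Equiv.swap 0 p i.succ) = (∑ i, g i) - g p := by
      have h1 : ∑ x : Fin (n+2), g (Equiv.swap 0 p x) = ∑ i, g i :=
        Equiv.sum_comp (Equiv.swap 0 p) g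
      rw [Fin.sum_univ_succ] at h1
      simp only [Equiv.swap_apply_left] at h1
      linarith
    rw [hsucc]; ring
  simp only [key]
  rw [← Finset.mul_sum]
  congr 1
  simp only [mul_sub, Finset.sum_sub_distrib, Finset.sum_mul]

lemma sum_perm_pair' {n : ℕ} (w w' : Fin (n+2)) (hww' : w ≠ w')
    (f g : Fin (n+2) → ℝ) :
    ∑ σ : Equiv.Perm (Fin (n+2)), f (σ w) * g (σ w')
      = (n.factorial : ℝ) * ((∑ i, f i) * (∑ i, g i) - ∑ i, f i * g i) := by
  have hne : Equiv.swap 0 w w' ≠ 0 := by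
    intro h
    apply hww'
    have := congrArg (Equiv.swap 0 w) h
    rw [Equiv.swap_apply_self] at this
    rw [this, Equiv.swap_apply_left]
  have h0 : ∑ σ : Equiv.Perm (Fin (n+2)), f (σ w) * g (σ w')
      = ∑ σ : Equiv.Perm (Fin (n+2)), f (σ 0) * g (σ (Equiv.swap 0 w w')) := by
    refine Fintype.sum_equiv (Equiv.mulRight (Equiv.swap 0 w)) _ _ ?_
    intro σ
    simp [Equiv.Perm.mul_apply, Equiv.swap_apply_self]
  rw [h0, sum_perm_pair_zero' _ hne]

/-- Theorem 4 (ρ_{S1} for 1-D mapping): with independent uniform permutations `σ, π`,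
symbol energy `E_w = u(σ w)² + u(π w)²`; for `w ≠ w'`,
`E[E_w·E_{w'}] = 2ρ₁ + 2m₂²` with `ρ₁ = (N·m₂² − m₄)/(N−1)`. -/
theorem rhoS1_oneD (N : ℕ) (hN : 2 ≤ N) (u : Fin N → ℝ)
    (w w' : Fin N) (hww' : w ≠ w') :
    permExpect2 N (fun p =>
        ((u (p.1 w)) ^ 2 + (u (p.2 w)) ^ 2) * ((u (p.1 w')) ^ 2 + (u (p.2 w')) ^ 2))
      = 2 * (((N : ℝ) * (empMoment N u 2) ^ 2 - empMoment N u 4) / ((N : ℝ) - 1))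
        + 2 * (empMoment N u 2) ^ 2 := by
  obtain ⟨n, rfl⟩ : ∃ n, N = n + 2 := ⟨N - 2, by omega⟩
  unfold permExpect2 empMoment
  set A : ℝ := ∑ i : Fin (n+2), u i ^ 2 with hA
  set B : ℝ := ∑ i : Fin (n+2), u i ^ 4 with hB
  have h2 : ∀ v : Fin (n+2), ∑ σ : Equiv.Perm (Fin (n+2)), u (σ v) ^ 2
      = ((n+1).factorial : ℝ) * A := fun v => sum_perm_apply' v (fun i => u i ^ 2)
  have hp : ∑ σ : Equiv.Perm (Fin (n+2)), u (σ w) ^ 2 * u (σ w') ^ 2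
      = (n.factorial : ℝ) * (A * A - B) := by
    rw [sum_perm_pair' w w' hww' (fun i => u i ^ 2) (fun i => u i ^ 2)]
    have : ∑ i : Fin (n+2), u i ^ 2 * u i ^ 2 = B := by
      rw [hB]; congr 1; ext i; ring
    rw [this]
  have hsum : ∑ p : Equiv.Perm (Fin (n+2)) × Equiv.Perm (Fin (n+2)),
      ((u (p.1 w)) ^ 2 + (u (p.2 w)) ^ 2) * ((u (p.1 w')) ^ 2 + (u (p.2 w')) ^ 2)
      = 2 * ((n+2).factorial : ℝ) * ((n.factorial : ℝ) * (A * A - B))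
        + 2 * (((n+1).factorial : ℝ) * A) ^ 2 := by
    rw [Fintype.sum_prod_type]
    have inner : ∀ σ : Equiv.Perm (Fin (n+2)),
        ∑ π : Equiv.Perm (Fin (n+2)),
          ((u (σ w)) ^ 2 + (u (π w)) ^ 2) * ((u (σ w')) ^ 2 + (u (π w')) ^ 2)
        = ((n+2).factorial : ℝ) * (u (σ w) ^ 2 * u (σ w') ^ 2)
          + u (σ w) ^ 2 * (((n+1).factorial : ℝ) * A)
          + (((n+1).factorial : ℝ) * A) * u (σ w') ^ 2
          + (n.factorial : ℝ) * (A * A - B) := by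
      intro σ
      have expand : ∀ π : Equiv.Perm (Fin (n+2)),
          ((u (σ w)) ^ 2 + (u (π w)) ^ 2) * ((u (σ w')) ^ 2 + (u (π w')) ^ 2)
          = u (σ w) ^ 2 * u (σ w') ^ 2 + u (σ w) ^ 2 * u (π w') ^ 2
            + u (π w) ^ 2 * u (σ w') ^ 2 + u (π w) ^ 2 * u (π w') ^ 2 := by
        intro π; ring
      simp only [expand]
      rw [Finset.sum_add_distrib, Finset.sum_add_distrib, Finset.sum_add_distrib,
        Finset.sum_const, ← Finset.mul_sum, ← Finset.sum_mul, hp, h2 w', h2 w]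
      simp [Fintype.card_perm, Fintype.card_fin, nsmul_eq_mul]
    simp only [inner]
    have t1 : ∑ σ : Equiv.Perm (Fin (n+2)),
        ((n+2).factorial : ℝ) * (u (σ w) ^ 2 * u (σ w') ^ 2)
        = ((n+2).factorial : ℝ) * ((n.factorial : ℝ) * (A * A - B)) := by
      rw [← Finset.mul_sum, hp]
    have t2 : ∑ σ : Equiv.Perm (Fin (n+2)), u (σ w) ^ 2 * (((n+1).factorial : ℝ) * A)
        = (((n+1).factorial : ℝ) * A) * (((n+1).factorial : ℝ) * A) := by
      rw [← Finset.sum_mul, h2 w]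
    have t3 : ∑ σ : Equiv.Perm (Fin (n+2)), (((n+1).factorial : ℝ) * A) * u (σ w') ^ 2
        = (((n+1).factorial : ℝ) * A) * (((n+1).factorial : ℝ) * A) := by
      rw [← Finset.mul_sum, h2 w']
    rw [Finset.sum_add_distrib, Finset.sum_add_distrib, Finset.sum_add_distrib,
      t1, t2, t3, Finset.sum_const]
    simp only [Finset.card_univ, Fintype.card_perm, Fintype.card_fin, nsmul_eq_mul]
    ring
  rw [hsum]
  have hfac2 : ((n+2).factorial : ℝ) = ((n:ℝ)+2) * ((n:ℝ)+1) * (n.factorial : ℝ) := by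
    rw [show n + 2 = (n+1)+1 by ring, Nat.factorial_succ, Nat.factorial_succ]
    push_cast; ring
  have hfac1 : ((n+1).factorial : ℝ) = ((n:ℝ)+1) * (n.factorial : ℝ) := by
    rw [Nat.factorial_succ]; push_cast; ring
  have hf0 : (n.factorial : ℝ) ≠ 0 := Nat.cast_ne_zero.mpr n.factorial_ne_zero
  have hn2 : ((n:ℝ)+2) ≠ 0 := by positivity
  have hn1 : ((n:ℝ)+1) ≠ 0 := by positivity
  rw [Fintype.card_prod, Fintype.card_perm, Fintype.card_fin]
  push_cast
  rw [hfac2, hfac1, show ((n:ℝ) + 2) - 1 = (n:ℝ) + 1 by ring]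
  field_simp
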